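/- (Theorem 1, PSSV proximal operator.) Let B be a real m×m matrix with singular value decomposition B = U D Vᵀ, where U and V are orthogonal and D = diag(σ₁, …, σ_m) with σ₁ ≥ σ₂ ≥ … ≥ σ_m ≥ 0 the singular values of B. Fix an integer 0 ≤ r ≤ m and μ > 0. Write D_r for the diagonal matrix containing the r largest singular values σ₁,…,σ_r (and zeros elsewhere) and D_{r'} for the diagonal matrix containing the remaining singular values σ_{r+1},…,σ_m (and zeros elsewhere), and let 𝒮_τ[x] = sign(x)·max(|x| − τ, 0) be the soft-thresholding operator applied entrywise. Then J* = U (D_r + 𝒮_{1/μ}[D_{r'}]) Vᵀ is a global minimizer of the problem min_J ‖J‖_{>r} + (μ/2)‖J − B‖_F², where ‖J‖_{>r} = Σ_{i=r+1}^{m} σ_i(J) is the sum of all but the r largest singular values of J. -/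

import Mathlib

open Matrix

/-- The singular values of a real `m × m` matrix, in decreasing order:
square roots of the eigenvalues of `AᵀA` (= `AᴴA` over `ℝ`), sorted decreasingly. -/
noncomputable def singularValuesDesc {m : ℕ} (A : Matrix (Fin m) (Fin m) ℝ) :
    Fin m → ℝ :=
  fun i =>
    Real.sqrt
      ((Matrix.isHermitian_conjTranspose_mul_self A).eigenvalues
        (Tuple.sort (Matrix.isHermitian_conjTranspose_mul_self A).eigenvalues i.rev))

/-- The PSSV norm `‖A‖_{>r} = Σ_{i=r+1}^{m} σ_i(A)`: the sum of all but the `r` largest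
singular values of `A`. -/
noncomputable def pssvNorm {m : ℕ} (r : ℕ) (A : Matrix (Fin m) (Fin m) ℝ) : ℝ :=
  ∑ i : Fin m, if r ≤ (i : ℕ) then singularValuesDesc A i else 0

/-- The soft-thresholding (singular value thresholding) operator
`𝒮_τ[x] = sign(x)·max(|x| − τ, 0)`. -/
noncomputable def softThreshold (τ x : ℝ) : ℝ := Real.sign x * max (|x| - τ) 0

section PSSVAux
open Polynomial
lemma pssv_charpoly_diag {m : ℕ} (d : Fin m → ℝ) :
    (Matrix.diagonal d).charpoly = ∏ i, (X - C (d i)) := by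
  unfold Matrix.charpoly
  rw [show charmatrix (diagonal d) = diagonal (fun i => X - C (d i)) by
    ext i j
    by_cases h : i = j
    · subst h; simp [charmatrix_apply_eq]
    · simp [charmatrix_apply_ne _ _ _ h, diagonal_apply_ne _ h]]
  rw [det_diagonal]

lemma pssv_charpoly_conj {m : ℕ} (Q A : Matrix (Fin m) (Fin m) ℝ) (hQ : Qᵀ * Q = 1) :
    (Q * A * Qᵀ).charpoly = A.charpoly := by
  unfold Matrix.charpoly
  have hc : C.mapMatrix Qᵀ * scalar (Fin m) X = scalar (Fin m) X * C.mapMatrix Qᵀ :=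
    (Matrix.scalar_commute X (fun r => Commute.all X r) _).symm
  have key : charmatrix (Q * A * Qᵀ) = C.mapMatrix Q * charmatrix A * C.mapMatrix Qᵀ := by
    rw [charmatrix, charmatrix, _root_.map_mul, _root_.map_mul, Matrix.mul_sub, Matrix.sub_mul]
    congr 1
    rw [mul_assoc, ← hc, ← mul_assoc, ← _root_.map_mul,
      show Q * Qᵀ = 1 from mul_eq_one_comm.mp hQ, _root_.map_one, one_mul]
  have hdet : (C.mapMatrix Qᵀ).det * (C.mapMatrix Q).det = 1 := by
    rw [← det_mul, ← _root_.map_mul, hQ, _root_.map_one, det_one]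
  rw [key, det_mul, det_mul]
  ring_nf
  rw [mul_comm ((C.mapMatrix Q).det), mul_assoc, mul_comm ((C.mapMatrix Q).det), hdet, mul_one]

/-- multiset of roots: eigenvalue multiset of a conjugated diagonal. -/
lemma pssv_eig_multiset {m : ℕ} {A Q : Matrix (Fin m) (Fin m) ℝ} {d : Fin m → ℝ}
    (hQ : Qᵀ * Q = 1) (hA : A = Q * diagonal d * Qᵀ) (hH : A.IsHermitian) :
    Finset.univ.val.map hH.eigenvalues = Finset.univ.val.map d := by
  obtain ⟨W, hW, hsp⟩ : ∃ W : Matrix (Fin m) (Fin m) ℝ,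
      Wᵀ * W = 1 ∧ A = W * diagonal hH.eigenvalues * Wᵀ := by
    refine ⟨(hH.eigenvectorUnitary : Matrix (Fin m) (Fin m) ℝ), ?_, ?_⟩
    · have := hH.eigenvectorUnitary.2
      rw [Matrix.mem_unitaryGroup_iff'] at this
      simpa [Matrix.star_eq_conjTranspose] using this
    · simpa [Matrix.star_eq_conjTranspose] using hH.spectral_theorem
  have hc1 : A.charpoly = ∏ i, (X - C (hH.eigenvalues i)) := by
    conv_lhs => rw [hsp]
    rw [pssv_charpoly_conj _ _ hW, pssv_charpoly_diag]
  have hc2 : A.charpoly = ∏ i, (X - C (d i)) := by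
    conv_lhs => rw [hA]
    rw [pssv_charpoly_conj _ _ hQ, pssv_charpoly_diag]
  have hroots : ∀ f : Fin m → ℝ, (∏ i, (X - C (f i))).roots = Finset.univ.val.map f := by
    intro f
    have : (∏ i, (X - C (f i))) = ((Finset.univ.val.map f).map (fun a => X - C a)).prod := by
      rw [Multiset.map_map]; rfl
    rw [this, Polynomial.roots_multiset_prod_X_sub_C]
  have := congrArg Polynomial.roots (hc1.symm.trans hc2)
  rwa [hroots, hroots] at this

lemma pssv_multiset_perm {m : ℕ} (f : Fin m → ℝ) (e : Equiv.Perm (Fin m)) :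
    Finset.univ.val.map (fun i => f (e i)) = Finset.univ.val.map f := by
  have h1 : Finset.univ.val.map (fun i => f (e i)) = (Finset.univ.val.map e).map f := by
    rw [Multiset.map_map]; rfl
  rw [h1, show Finset.univ.val.map ⇑e = Finset.univ.val from by
    have := Finset.map_univ_equiv e
    simpa [Finset.map] using congrArg Finset.val this]

lemma pssv_monotone_eq {m : ℕ} (f g : Fin m → ℝ) (hf : Monotone f) (hg : Monotone g)
    (h : Finset.univ.val.map f = Finset.univ.val.map g) : f = g := by
  rw [Fin.univ_val_map, Fin.univ_val_map, Multiset.coe_eq_coe] at h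
  have hs : ∀ (k : Fin m → ℝ), Monotone k → (List.ofFn k).SortedLE := by
    intro k hk
    rw [List.sortedLE_ofFn_iff]
    exact hk
  exact List.ofFn_injective (h.eq_of_sortedLE (hs f hf) (hs g hg))

/-- Key lemma: the singular values of `W * diagonal d * Qᵀ` with `d` antitone nonneg are `d`. -/
lemma pssv_svd_vals {m : ℕ} (A W Q : Matrix (Fin m) (Fin m) ℝ) (d : Fin m → ℝ)
    (hW : Wᵀ * W = 1) (hQ : Qᵀ * Q = 1) (hd : Antitone d) (hd0 : ∀ i, 0 ≤ d i)
    (hA : A = W * diagonal d * Qᵀ) : singularValuesDesc A = d := by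
  have hH := Matrix.isHermitian_conjTranspose_mul_self A
  have hATA : Aᴴ * A = Q * diagonal (fun i => d i * d i) * Qᵀ := by
    rw [Matrix.conjTranspose_eq_transpose_of_trivial, hA]
    rw [Matrix.transpose_mul, Matrix.transpose_mul, Matrix.transpose_transpose,
      Matrix.diagonal_transpose]
    calc Qᵀᵀ * (diagonal d * Wᵀ) * (W * diagonal d * Qᵀ)
        = Q * (diagonal d * (Wᵀ * W) * diagonal d) * Qᵀ := by
          rw [Matrix.transpose_transpose]; noncomm_ring
      _ = Q * diagonal (fun i => d i * d i) * Qᵀ := by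
          rw [hW, mul_one, diagonal_mul_diagonal]
  have hmul := pssv_eig_multiset hQ hATA hH
  -- compare sorted tuples
  set e := Tuple.sort hH.eigenvalues with he
  have hmono1 : Monotone (fun i => hH.eigenvalues (e i)) := Tuple.monotone_sort hH.eigenvalues
  have hmono2 : Monotone (fun i : Fin m => d i.rev * d i.rev) := by
    intro i j hij
    have h1 : d i.rev ≤ d j.rev := hd (by
      simp only [Fin.rev_le_rev]
      exact hij)
    exact mul_le_mul h1 h1 (hd0 _) (hd0 _)
  have hkey : (fun i => hH.eigenvalues (e i)) = (fun i : Fin m => d i.rev * d i.rev) := by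
    apply pssv_monotone_eq _ _ hmono1 hmono2
    rw [pssv_multiset_perm hH.eigenvalues e, hmul]
    exact (pssv_multiset_perm (fun i => d i * d i) (Fin.revPerm)).symm
  funext i
  have := congrFun hkey i.rev
  simp only [Fin.rev_rev] at this
  unfold singularValuesDesc
  rw [← he, this, Real.sqrt_mul_self (hd0 i)]

lemma pssv_sdesc_nonneg {m : ℕ} (A : Matrix (Fin m) (Fin m) ℝ) (i : Fin m) :
    0 ≤ singularValuesDesc A i := Real.sqrt_nonneg _

lemma pssv_sdesc_antitone {m : ℕ} (A : Matrix (Fin m) (Fin m) ℝ) :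
    Antitone (singularValuesDesc A) := by
  intro i j hij
  unfold singularValuesDesc
  set f := (Matrix.isHermitian_conjTranspose_mul_self A).eigenvalues with hf
  apply Real.sqrt_le_sqrt
  exact Tuple.monotone_sort f (show j.rev ≤ i.rev by simpa [Fin.rev_le_rev] using hij)


lemma pssv_perm_conj {m : ℕ} (W : Matrix (Fin m) (Fin m) ℝ) (hW : Wᵀ * W = 1)
    (e : Equiv.Perm (Fin m)) (lam : Fin m → ℝ) :
    ((W.submatrix id ⇑e)ᵀ * (W.submatrix id ⇑e) = 1) ∧
    (W.submatrix id ⇑e) * diagonal (fun i => lam (e i)) * (W.submatrix id ⇑e)ᵀ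
      = W * diagonal lam * Wᵀ := by
  constructor
  · ext i j
    have h := congrFun (congrFun hW (e i)) (e j)
    simp only [Matrix.mul_apply, Matrix.transpose_apply, Matrix.submatrix_apply, id_eq] at *
    rw [h]
    by_cases hij : i = j
    · subst hij; simp
    · rw [Matrix.one_apply_ne hij, Matrix.one_apply_ne (fun hc => hij (e.injective hc))]
  · ext a b
    simp only [Matrix.mul_apply, Matrix.transpose_apply, Matrix.submatrix_apply, id_eq,
      Matrix.diagonal_apply, mul_ite, mul_zero, ite_mul, zero_mul, Finset.sum_ite_eq,
      Finset.sum_ite_eq', Finset.mem_univ, if_true]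
    exact Fintype.sum_equiv e _ _ (fun i => rfl)

-- columns of M orthogonal with norms s i  ⇒  M = P * diagonal s with Pᵀ P = 1
lemma pssv_extend {m : ℕ} (M : Matrix (Fin m) (Fin m) ℝ) (s : Fin m → ℝ)
    (hs0 : ∀ i, 0 ≤ s i)
    (hMTM : Mᵀ * M = diagonal (fun i => s i * s i)) :
    ∃ P : Matrix (Fin m) (Fin m) ℝ, Pᵀ * P = 1 ∧ M = P * diagonal s := by
  classical
  have hcol : ∀ i j, ∑ a, M a i * M a j = if i = j then s i * s i else 0 := by
    intro i j
    have := congrFun (congrFun hMTM i) j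
    simpa [Matrix.mul_apply, Matrix.diagonal_apply] using this
  have hzero : ∀ i, s i = 0 → ∀ a, M a i = 0 := by
    intro i hsi a
    have h := hcol i i
    simp [hsi] at h
    have : ∀ b ∈ Finset.univ, (0:ℝ) ≤ M b i * M b i := fun b _ => mul_self_nonneg _
    have := (Finset.sum_eq_zero_iff_of_nonneg this).mp h a (Finset.mem_univ a)
    nlinarith [this]
  set v : Fin m → EuclideanSpace ℝ (Fin m) :=
    fun i => (s i)⁻¹ • ((WithLp.equiv 2 (Fin m → ℝ)).symm (fun a => M a i)) with hv
  have hinner : ∀ i j, inner ℝ (v i) (v j) = (s i)⁻¹ * (s j)⁻¹ * (if i = j then s i * s i else 0) := by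
    intro i j
    rw [hv]
    simp only [inner_smul_left, inner_smul_right, RCLike.conj_to_real, conj_trivial]
    rw [PiLp.inner_apply]
    simp only [RCLike.inner_apply, conj_trivial, WithLp.equiv_symm_apply, WithLp.ofLp_toLp]
    rw [← hcol i j, Finset.sum_congr rfl fun x _ => mul_comm (M x j) (M x i)]
    ring
  have hON : Orthonormal ℝ (Set.restrict {i | s i ≠ 0} v) := by
    rw [orthonormal_iff_ite]
    rintro ⟨i, hi⟩ ⟨j, hj⟩
    change inner ℝ (v i) (v j) = _
    rw [hinner i j]
    by_cases hij : i = j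
    · subst hij
      simp only [if_true, Subtype.mk.injEq]
      have hi' : s i ≠ 0 := hi
      field_simp
    · simp [hij, Subtype.mk.injEq]
  obtain ⟨b, hb⟩ := hON.exists_orthonormalBasis_extension_of_card_eq
    (by simp [finrank_euclideanSpace_fin])
  refine ⟨Matrix.of (fun a i => b i a), ?_, ?_⟩
  · ext i j
    have := (orthonormal_iff_ite.mp b.orthonormal) i j
    rw [PiLp.inner_apply] at this
    simp only [RCLike.inner_apply, conj_trivial] at this
    simp only [Matrix.mul_apply, Matrix.transpose_apply, Matrix.of_apply]
    rw [show ∑ k, b i k * b j k = ∑ k, b j k * b i k from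
      Finset.sum_congr rfl fun k _ => mul_comm _ _, this]
    by_cases hij : i = j
    · subst hij; simp
    · simp [hij, Matrix.one_apply_ne hij]
  · ext a i
    simp only [Matrix.mul_apply, Matrix.diagonal_apply, mul_ite, mul_zero, Finset.sum_ite_eq',
      Finset.mem_univ, if_true, Matrix.of_apply]
    by_cases hsi : s i = 0
    · rw [hzero i hsi a, hsi, mul_zero]
    · have hbi : b i = v i := hb i hsi
      rw [hbi, hv]
      simp only [PiLp.smul_apply, WithLp.equiv_symm_apply, WithLp.ofLp_toLp, smul_eq_mul]
      field_simp

lemma pssv_svd_exists {m : ℕ} (J : Matrix (Fin m) (Fin m) ℝ) :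
    ∃ P Q : Matrix (Fin m) (Fin m) ℝ, Pᵀ * P = 1 ∧ Qᵀ * Q = 1 ∧
      J = P * diagonal (singularValuesDesc J) * Qᵀ := by
  classical
  have hH := Matrix.isHermitian_conjTranspose_mul_self J
  set lam := hH.eigenvalues with hlam
  obtain ⟨W, hW, hsp⟩ : ∃ W : Matrix (Fin m) (Fin m) ℝ,
      Wᵀ * W = 1 ∧ Jᴴ * J = W * diagonal lam * Wᵀ := by
    refine ⟨(hH.eigenvectorUnitary : Matrix (Fin m) (Fin m) ℝ), ?_, ?_⟩
    · have := hH.eigenvectorUnitary.2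
      rw [Matrix.mem_unitaryGroup_iff'] at this
      simpa [Matrix.star_eq_conjTranspose] using this
    · simpa [Matrix.star_eq_conjTranspose] using hH.spectral_theorem
  set e : Equiv.Perm (Fin m) := Fin.revPerm.trans (Tuple.sort lam) with he
  set s := singularValuesDesc J with hs
  have hse : ∀ i, s i = Real.sqrt (lam (e i)) := fun i => rfl
  have hlam0 : ∀ i, 0 ≤ lam i := fun i =>
    (Matrix.posSemidef_conjTranspose_mul_self J).eigenvalues_nonneg i
  have hs2 : ∀ i, lam (e i) = s i * s i := by
    intro i
    rw [hse, Real.mul_self_sqrt (hlam0 _)]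
  set Q := W.submatrix id ⇑e with hQdef
  obtain ⟨hQ, hconj⟩ := pssv_perm_conj W hW e lam
  have hJTJ : Jᵀ * J = Q * diagonal (fun i => s i * s i) * Qᵀ := by
    rw [← Matrix.conjTranspose_eq_transpose_of_trivial]
    have hdd : diagonal (fun i => lam (e i)) = diagonal (fun i => s i * s i) := by
      exact congrArg diagonal (funext fun i => hs2 i)
    rw [hsp, ← hconj, hdd]
  set M := J * Q with hM
  have hMTM : Mᵀ * M = diagonal (fun i => s i * s i) := by
    rw [hM, Matrix.transpose_mul]
    calc Qᵀ * Jᵀ * (J * Q) = Qᵀ * (Jᵀ * J) * Q := by noncomm_ring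
      _ = (Qᵀ * Q) * diagonal (fun i => s i * s i) * (Qᵀ * Q) := by
          rw [hJTJ]; noncomm_ring
      _ = diagonal (fun i => s i * s i) := by rw [hQ, one_mul, mul_one]
  obtain ⟨P, hP, hMP⟩ := pssv_extend M s (fun i => pssv_sdesc_nonneg J i) hMTM
  refine ⟨P, Q, hP, hQ, ?_⟩
  have hQQ : Q * Qᵀ = 1 := mul_eq_one_comm.mp hQ
  calc J = J * (Q * Qᵀ) := by rw [hQQ, mul_one]
    _ = M * Qᵀ := by rw [hM, mul_assoc]
    _ = P * diagonal s * Qᵀ := by rw [hMP]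


noncomputable def pssvExt {m : ℕ} (u : Fin m → ℝ) : ℕ → ℝ :=
  fun n => if h : n < m then u ⟨n, h⟩ else 0

lemma pssv_ext_sum {m : ℕ} (u : Fin m → ℝ) (i : Fin m) :
    ∑ k ∈ Finset.range m, (if (i : ℕ) ≤ k then pssvExt u k - pssvExt u (k + 1) else 0) = u i := by
  rw [← Finset.sum_filter]
  rw [show (Finset.range m).filter (fun k => (i : ℕ) ≤ k) = Finset.Ico (i : ℕ) m by
    ext k; simp [Finset.mem_filter, Finset.mem_Ico, and_comm]]
  rw [Finset.sum_Ico_eq_sub _ (le_of_lt i.2)]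
  rw [Finset.sum_range_sub' (pssvExt u), Finset.sum_range_sub' (pssvExt u)]
  have h1 : pssvExt u m = 0 := by simp [pssvExt]
  have h2 : pssvExt u (i : ℕ) = u i := by simp [pssvExt, i.2]
  rw [h1, h2]
  ring

lemma pssv_ext_step_nonneg {m : ℕ} (u : Fin m → ℝ) (hu : Antitone u) (hu0 : ∀ i, 0 ≤ u i)
    (n : ℕ) : 0 ≤ pssvExt u n - pssvExt u (n + 1) := by
  by_cases h1 : n + 1 < m
  · have h0 : n < m := Nat.lt_of_succ_lt h1
    simp only [pssvExt, dif_pos h1, dif_pos h0, sub_nonneg]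
    exact hu (by simp [Fin.le_def, Nat.le_succ])
  · by_cases h0 : n < m
    · simp only [pssvExt, dif_pos h0, dif_neg h1, sub_zero]
      exact hu0 _
    · simp [pssvExt, dif_neg h0, dif_neg h1]

lemma pssv_card_le {m k : ℕ} (hk : k < m) :
    ∑ i : Fin m, (if (i : ℕ) ≤ k then (1 : ℝ) else 0) = (k : ℝ) + 1 := by
  rw [Fin.sum_univ_eq_sum_range (fun n => if n ≤ k then (1 : ℝ) else 0)]
  rw [← Finset.sum_filter]
  rw [show (Finset.range m).filter (fun n => n ≤ k) = Finset.range (k + 1) by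
    ext n
    simp only [Finset.mem_filter, Finset.mem_range, Nat.lt_succ_iff]
    exact ⟨fun h => h.2, fun h => ⟨lt_of_le_of_lt h hk, h⟩⟩]
  simp

lemma pssv_swap4 {m : ℕ} (F : Fin m → Fin m → ℕ → ℕ → ℝ) :
    ∑ i : Fin m, ∑ j : Fin m, ∑ k ∈ Finset.range m, ∑ l ∈ Finset.range m, F i j k l
      = ∑ k ∈ Finset.range m, ∑ l ∈ Finset.range m, ∑ i : Fin m, ∑ j : Fin m, F i j k l := by
  calc ∑ i : Fin m, ∑ j : Fin m, ∑ k ∈ Finset.range m, ∑ l ∈ Finset.range m, F i j k l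
      = ∑ i, ∑ k ∈ Finset.range m, ∑ j, ∑ l ∈ Finset.range m, F i j k l :=
        Finset.sum_congr rfl fun i _ => Finset.sum_comm
    _ = ∑ k ∈ Finset.range m, ∑ i : Fin m, ∑ j : Fin m, ∑ l ∈ Finset.range m, F i j k l := Finset.sum_comm
    _ = ∑ k ∈ Finset.range m, ∑ i, ∑ l ∈ Finset.range m, ∑ j, F i j k l :=
        Finset.sum_congr rfl fun k _ => Finset.sum_congr rfl fun i _ => Finset.sum_comm
    _ = ∑ k ∈ Finset.range m, ∑ l ∈ Finset.range m, ∑ i : Fin m, ∑ j : Fin m, F i j k l :=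
        Finset.sum_congr rfl fun k _ => Finset.sum_comm

lemma pssv_swap3 {m : ℕ} (F : ℕ → ℕ → Fin m → ℝ) :
    ∑ k ∈ Finset.range m, ∑ l ∈ Finset.range m, ∑ i : Fin m, F k l i
      = ∑ i : Fin m, ∑ k ∈ Finset.range m, ∑ l ∈ Finset.range m, F k l i :=
  calc ∑ k ∈ Finset.range m, ∑ l ∈ Finset.range m, ∑ i : Fin m, F k l i
      = ∑ k ∈ Finset.range m, ∑ i : Fin m, ∑ l ∈ Finset.range m, F k l i :=
        Finset.sum_congr rfl fun k _ => Finset.sum_comm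
    _ = ∑ i : Fin m, ∑ k ∈ Finset.range m, ∑ l ∈ Finset.range m, F k l i := Finset.sum_comm

lemma pssv_ds {m : ℕ} (s t : Fin m → ℝ) (S : Matrix (Fin m) (Fin m) ℝ)
    (hs : Antitone s) (ht : Antitone t) (hs0 : ∀ i, 0 ≤ s i) (ht0 : ∀ i, 0 ≤ t i)
    (hS0 : ∀ i j, 0 ≤ S i j) (hrow : ∀ i, ∑ j, S i j = 1) (hcol : ∀ j, ∑ i, S i j = 1) :
    ∑ i : Fin m, ∑ j : Fin m, s i * t j * S i j ≤ ∑ i : Fin m, s i * t i := by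
  classical
  set a : ℕ → ℝ := fun n => pssvExt s n - pssvExt s (n + 1) with ha
  set b : ℕ → ℝ := fun n => pssvExt t n - pssvExt t (n + 1) with hb
  have ha0 : ∀ n, 0 ≤ a n := pssv_ext_step_nonneg s hs hs0
  have hb0 : ∀ n, 0 ≤ b n := pssv_ext_step_nonneg t ht ht0
  -- expand s i * t j * S i j as quadruple sum
  have hexp : ∀ i j : Fin m, s i * t j * S i j
      = ∑ k ∈ Finset.range m, ∑ l ∈ Finset.range m,
          (a k * b l) * ((if (i:ℕ) ≤ k then (1:ℝ) else 0) * (if (j:ℕ) ≤ l then (1:ℝ) else 0)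
            * S i j) := by
    intro i j
    rw [← pssv_ext_sum s i, ← pssv_ext_sum t j, Finset.sum_mul_sum, Finset.sum_mul]
    refine Finset.sum_congr rfl fun k _ => ?_
    rw [Finset.sum_mul]
    refine Finset.sum_congr rfl fun l _ => ?_
    by_cases h1 : (i:ℕ) ≤ k <;> by_cases h2 : (j:ℕ) ≤ l <;> simp [h1, h2, ha, hb] <;> ring
  -- the key per-(k,l) bound
  have hT : ∀ k ∈ Finset.range m, ∀ l ∈ Finset.range m,
      ∑ i : Fin m, ∑ j : Fin m, ((if (i:ℕ) ≤ k then (1:ℝ) else 0) * (if (j:ℕ) ≤ l then (1:ℝ) else 0) * S i j)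
        ≤ ((min k l : ℕ) : ℝ) + 1 := by
    intro k hk l hl
    rw [Finset.mem_range] at hk hl
    have hbk : ∑ i : Fin m, ∑ j : Fin m, ((if (i:ℕ) ≤ k then (1:ℝ) else 0) * (if (j:ℕ) ≤ l then (1:ℝ) else 0)
        * S i j) ≤ (k : ℝ) + 1 := by
      calc ∑ i : Fin m, ∑ j : Fin m, ((if (i:ℕ) ≤ k then (1:ℝ) else 0) * (if (j:ℕ) ≤ l then (1:ℝ) else 0) * S i j)
          ≤ ∑ i : Fin m, ∑ j : Fin m, ((if (i:ℕ) ≤ k then (1:ℝ) else 0) * S i j) := by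
            refine Finset.sum_le_sum fun i _ => Finset.sum_le_sum fun j _ => ?_
            by_cases h1 : (i:ℕ) ≤ k <;> by_cases h2 : (j:ℕ) ≤ l <;>
              simp [h1, h2, hS0 i j]
        _ = ∑ i : Fin m, (if (i:ℕ) ≤ k then (1:ℝ) else 0) := by
            refine Finset.sum_congr rfl fun i _ => ?_
            rw [← Finset.mul_sum, hrow i, mul_one]
        _ = (k : ℝ) + 1 := pssv_card_le hk
    have hbl : ∑ i : Fin m, ∑ j : Fin m, ((if (i:ℕ) ≤ k then (1:ℝ) else 0) * (if (j:ℕ) ≤ l then (1:ℝ) else 0)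
        * S i j) ≤ (l : ℝ) + 1 := by
      rw [Finset.sum_comm]
      calc ∑ j : Fin m, ∑ i : Fin m, ((if (i:ℕ) ≤ k then (1:ℝ) else 0) * (if (j:ℕ) ≤ l then (1:ℝ) else 0) * S i j)
          ≤ ∑ j : Fin m, ∑ i : Fin m, ((if (j:ℕ) ≤ l then (1:ℝ) else 0) * S i j) := by
            refine Finset.sum_le_sum fun j _ => Finset.sum_le_sum fun i _ => ?_
            by_cases h1 : (i:ℕ) ≤ k <;> by_cases h2 : (j:ℕ) ≤ l <;>
              simp [h1, h2, hS0 i j]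
        _ = ∑ j : Fin m, (if (j:ℕ) ≤ l then (1:ℝ) else 0) := by
            refine Finset.sum_congr rfl fun j _ => ?_
            rw [← Finset.mul_sum, hcol j, mul_one]
        _ = (l : ℝ) + 1 := pssv_card_le hl
    rcases le_total k l with h | h
    · rw [min_eq_left h]; exact hbk
    · rw [min_eq_right h]; exact hbl
  -- count: for k l < m, #{i ≤ k ∧ i ≤ l} = min k l + 1
  have hN : ∀ k ∈ Finset.range m, ∀ l ∈ Finset.range m,
      ∑ i : Fin m, ((if (i:ℕ) ≤ k then (1:ℝ) else 0) * (if (i:ℕ) ≤ l then (1:ℝ) else 0))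
        = ((min k l : ℕ) : ℝ) + 1 := by
    intro k hk l hl
    rw [Finset.mem_range] at hk hl
    have : ∀ i : Fin m, (if (i:ℕ) ≤ k then (1:ℝ) else 0) * (if (i:ℕ) ≤ l then (1:ℝ) else 0)
        = if (i:ℕ) ≤ min k l then (1:ℝ) else 0 := by
      intro i
      by_cases h1 : (i:ℕ) ≤ k <;> by_cases h2 : (i:ℕ) ≤ l <;>
        simp [h1, h2, le_min_iff]
    rw [Finset.sum_congr rfl fun i _ => this i]
    exact pssv_card_le (lt_of_le_of_lt (min_le_left k l) hk)
  calc ∑ i : Fin m, ∑ j : Fin m, s i * t j * S i j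
      = ∑ i : Fin m, ∑ j : Fin m, ∑ k ∈ Finset.range m, ∑ l ∈ Finset.range m,
          (a k * b l) * ((if (i:ℕ) ≤ k then (1:ℝ) else 0) * (if (j:ℕ) ≤ l then (1:ℝ) else 0)
            * S i j) :=
        Finset.sum_congr rfl fun i _ => Finset.sum_congr rfl fun j _ => hexp i j
    _ = ∑ k ∈ Finset.range m, ∑ l ∈ Finset.range m, ∑ i : Fin m, ∑ j : Fin m,
          (a k * b l) * ((if (i:ℕ) ≤ k then (1:ℝ) else 0) * (if (j:ℕ) ≤ l then (1:ℝ) else 0)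
            * S i j) := pssv_swap4 _
    _ = ∑ k ∈ Finset.range m, ∑ l ∈ Finset.range m, (a k * b l) *
          (∑ i : Fin m, ∑ j : Fin m, ((if (i:ℕ) ≤ k then (1:ℝ) else 0) * (if (j:ℕ) ≤ l then (1:ℝ) else 0)
            * S i j)) := by
        refine Finset.sum_congr rfl fun k _ => Finset.sum_congr rfl fun l _ => ?_
        rw [Finset.mul_sum]
        exact Finset.sum_congr rfl fun i _ => (Finset.mul_sum _ _ _).symm
    _ ≤ ∑ k ∈ Finset.range m, ∑ l ∈ Finset.range m, (a k * b l) * (((min k l : ℕ) : ℝ) + 1) := by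
        refine Finset.sum_le_sum fun k hk => Finset.sum_le_sum fun l hl => ?_
        exact mul_le_mul_of_nonneg_left (hT k hk l hl) (mul_nonneg (ha0 k) (hb0 l))
    _ = ∑ k ∈ Finset.range m, ∑ l ∈ Finset.range m, (a k * b l) *
          (∑ i : Fin m, ((if (i:ℕ) ≤ k then (1:ℝ) else 0) * (if (i:ℕ) ≤ l then (1:ℝ) else 0))) := by
        refine Finset.sum_congr rfl fun k hk => Finset.sum_congr rfl fun l hl => ?_
        rw [hN k hk l hl]
    _ = ∑ k ∈ Finset.range m, ∑ l ∈ Finset.range m, ∑ i : Fin m,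
          (a k * b l) * ((if (i:ℕ) ≤ k then (1:ℝ) else 0) * (if (i:ℕ) ≤ l then (1:ℝ) else 0)) := by
        refine Finset.sum_congr rfl fun k _ => Finset.sum_congr rfl fun l _ => ?_
        rw [Finset.mul_sum]
    _ = ∑ i : Fin m, ∑ k ∈ Finset.range m, ∑ l ∈ Finset.range m,
          (a k * b l) * ((if (i:ℕ) ≤ k then (1:ℝ) else 0) * (if (i:ℕ) ≤ l then (1:ℝ) else 0)) :=
        pssv_swap3 _
    _ = ∑ i : Fin m, (∑ k ∈ Finset.range m, (if (i:ℕ) ≤ k then a k else 0)) *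
          (∑ l ∈ Finset.range m, (if (i:ℕ) ≤ l then b l else 0)) := by
        refine Finset.sum_congr rfl fun i _ => ?_
        rw [Finset.sum_mul_sum]
        refine Finset.sum_congr rfl fun k _ => Finset.sum_congr rfl fun l _ => ?_
        by_cases h1 : (i:ℕ) ≤ k <;> by_cases h2 : (i:ℕ) ≤ l <;> simp [h1, h2] <;> ring
    _ = ∑ i : Fin m, s i * t i := by
        refine Finset.sum_congr rfl fun i _ => ?_
        simp only [ha, hb]
        rw [pssv_ext_sum s i, pssv_ext_sum t i]

section VN
variable {m : ℕ}

lemma pssv_row_sums {X : Matrix (Fin m) (Fin m) ℝ} (hX : Xᵀ * X = 1) (hX2 : X * Xᵀ = 1) :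
    (∀ i, ∑ j, X i j * X i j = 1) ∧ (∀ j, ∑ i, X i j * X i j = 1) := by
  constructor
  · intro i
    have := congrFun (congrFun hX2 i) i
    simpa [Matrix.mul_apply, Matrix.one_apply] using this
  · intro j
    have := congrFun (congrFun hX j) j
    simpa [Matrix.mul_apply, Matrix.one_apply] using this

lemma pssv_vonNeumann (J B P Q U V : Matrix (Fin m) (Fin m) ℝ) (s σ : Fin m → ℝ)
    (hP : Pᵀ * P = 1) (hQ : Qᵀ * Q = 1) (hU : Uᵀ * U = 1) (hV : Vᵀ * V = 1)
    (hs : Antitone s) (hs0 : ∀ i, 0 ≤ s i) (hσ : Antitone σ) (hσ0 : ∀ i, 0 ≤ σ i)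
    (hJ : J = P * diagonal s * Qᵀ) (hB : B = U * diagonal σ * Vᵀ) :
    Matrix.trace (Jᵀ * B) ≤ ∑ i, s i * σ i := by
  have hPP : P * Pᵀ = 1 := mul_eq_one_comm.mp hP
  have hQQ : Q * Qᵀ = 1 := mul_eq_one_comm.mp hQ
  have hUU : U * Uᵀ = 1 := mul_eq_one_comm.mp hU
  have hVV : V * Vᵀ = 1 := mul_eq_one_comm.mp hV
  set X := Pᵀ * U with hX
  set Y := Vᵀ * Q with hY
  have hXo : Xᵀ * X = 1 := by
    rw [hX, Matrix.transpose_mul, Matrix.transpose_transpose]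
    calc Uᵀ * P * (Pᵀ * U) = Uᵀ * (P * Pᵀ) * U := by noncomm_ring
      _ = 1 := by rw [hPP, mul_one, hU]
  have hXo2 : X * Xᵀ = 1 := mul_eq_one_comm.mp hXo
  have hYo : Yᵀ * Y = 1 := by
    rw [hY, Matrix.transpose_mul, Matrix.transpose_transpose]
    calc Qᵀ * V * (Vᵀ * Q) = Qᵀ * (V * Vᵀ) * Q := by noncomm_ring
      _ = 1 := by rw [hVV, mul_one, hQ]
  have hYo2 : Y * Yᵀ = 1 := mul_eq_one_comm.mp hYo
  have htr : Matrix.trace (Jᵀ * B) = ∑ i, ∑ j, s i * σ j * (X i j * Y j i) := by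
    rw [hJ, hB]
    rw [Matrix.transpose_mul, Matrix.transpose_mul, Matrix.transpose_transpose,
      Matrix.diagonal_transpose]
    have : Q * (diagonal s * Pᵀ) * (U * diagonal σ * Vᵀ)
        = Q * (diagonal s * X * diagonal σ * Vᵀ) := by
      rw [hX]; noncomm_ring
    rw [this, Matrix.trace_mul_comm]
    have : diagonal s * X * diagonal σ * Vᵀ * Q = diagonal s * X * diagonal σ * Y := by
      rw [hY]; noncomm_ring
    rw [this]
    rw [Matrix.trace]
    simp only [Matrix.diag_apply, Matrix.mul_apply, Matrix.diagonal_apply, ite_mul, zero_mul,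
      Finset.sum_ite_eq, Finset.mem_univ, if_true, mul_ite, mul_zero, Finset.sum_ite_eq',
      Finset.sum_ite_eq]
    refine Finset.sum_congr rfl fun i _ => Finset.sum_congr rfl fun j _ => ?_
    ring
  rw [htr]
  have hS1 := pssv_row_sums hXo hXo2
  have hS2 := pssv_row_sums hYo hYo2
  have key1 : ∑ i, ∑ j, s i * σ j * (X i j * X i j) ≤ ∑ i, s i * σ i :=
    pssv_ds s σ (Matrix.of fun i j => X i j * X i j) hs hσ hs0 hσ0
      (fun i j => mul_self_nonneg _) hS1.1 hS1.2
  have key2 : ∑ i, ∑ j, s i * σ j * (Y j i * Y j i) ≤ ∑ i, s i * σ i :=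
    pssv_ds s σ (Matrix.of fun i j => Y j i * Y j i) hs hσ hs0 hσ0
      (fun i j => mul_self_nonneg _) (fun i => hS2.2 i) (fun j => hS2.1 j)
  have hhalf : ∑ i, ∑ j, s i * σ j * (X i j * Y j i)
      ≤ (∑ i, ∑ j, s i * σ j * (X i j * X i j)) / 2
        + (∑ i, ∑ j, s i * σ j * (Y j i * Y j i)) / 2 := by
    have step : ∀ i j, s i * σ j * (X i j * Y j i)
        ≤ s i * σ j * (X i j * X i j) / 2 + s i * σ j * (Y j i * Y j i) / 2 := by
      intro i j
      have h1 : X i j * Y j i ≤ (X i j * X i j + Y j i * Y j i) / 2 := by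
        nlinarith [sq_nonneg (X i j - Y j i)]
      have h2 : 0 ≤ s i * σ j := mul_nonneg (hs0 i) (hσ0 j)
      nlinarith [mul_le_mul_of_nonneg_left h1 h2]
    calc ∑ i, ∑ j, s i * σ j * (X i j * Y j i)
        ≤ ∑ i, ∑ j, (s i * σ j * (X i j * X i j) / 2 + s i * σ j * (Y j i * Y j i) / 2) :=
          Finset.sum_le_sum fun i _ => Finset.sum_le_sum fun j _ => step i j
      _ = (∑ i, ∑ j, s i * σ j * (X i j * X i j)) / 2
          + (∑ i, ∑ j, s i * σ j * (Y j i * Y j i)) / 2 := by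
          simp [Finset.sum_add_distrib, Finset.sum_div]
  calc ∑ i, ∑ j, s i * σ j * (X i j * Y j i)
      ≤ (∑ i, ∑ j, s i * σ j * (X i j * X i j)) / 2
        + (∑ i, ∑ j, s i * σ j * (Y j i * Y j i)) / 2 := hhalf
    _ ≤ (∑ i, s i * σ i) / 2 + (∑ i, s i * σ i) / 2 := by
        gcongr
    _ = ∑ i, s i * σ i := by ring

end VN

lemma pssv_trace_sq {m : ℕ} (A P Q : Matrix (Fin m) (Fin m) ℝ) (d : Fin m → ℝ)
    (hP : Pᵀ * P = 1) (hQ : Qᵀ * Q = 1) (hA : A = P * diagonal d * Qᵀ) :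
    Matrix.trace (A * Aᵀ) = ∑ i, d i * d i := by
  have hQQ : Q * Qᵀ = 1 := mul_eq_one_comm.mp hQ
  rw [hA, Matrix.transpose_mul, Matrix.transpose_mul, Matrix.transpose_transpose,
    Matrix.diagonal_transpose]
  have h1 : P * diagonal d * Qᵀ * (Q * (diagonal d * Pᵀ))
      = P * (diagonal (fun i => d i * d i) * Pᵀ) := by
    calc P * diagonal d * Qᵀ * (Q * (diagonal d * Pᵀ))
        = P * ((diagonal d * (Qᵀ * Q) * diagonal d) * Pᵀ) := by noncomm_ring
      _ = P * (diagonal (fun i => d i * d i) * Pᵀ) := by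
          rw [hQ, mul_one, diagonal_mul_diagonal]
  rw [h1, Matrix.trace_mul_comm, mul_assoc, hP, mul_one, Matrix.trace_diagonal]

lemma pssv_scalar {μ σ x : ℝ} (hμ : 0 < μ) (hσ : 0 ≤ σ) (hx : 0 ≤ x) :
    max (σ - μ⁻¹) 0 + μ / 2 * ((max (σ - μ⁻¹) 0 - σ) * (max (σ - μ⁻¹) 0 - σ))
      ≤ x + μ / 2 * ((x - σ) * (x - σ)) := by
  have hinv : μ * μ⁻¹ = 1 := mul_inv_cancel₀ hμ.ne'
  rcases le_or_gt μ⁻¹ σ with h | h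
  · rw [max_eq_left (by linarith)]
    nlinarith [mul_nonneg hμ.le (sq_nonneg (x - σ + μ⁻¹))]
  · rw [max_eq_right (by linarith)]
    have h1 : μ * σ < 1 := by
      calc μ * σ < μ * μ⁻¹ := by exact mul_lt_mul_of_pos_left h hμ
        _ = 1 := hinv
    nlinarith [mul_nonneg hx (le_of_lt (sub_pos.mpr h1)), mul_nonneg hμ.le (sq_nonneg x)]

lemma pssv_soft_eq {τ x : ℝ} (hτ : 0 < τ) (hx : 0 ≤ x) :
    softThreshold τ x = max (x - τ) 0 := by
  unfold softThreshold
  rcases eq_or_lt_of_le hx with h | h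
  · rw [← h]
    simp only [Real.sign_zero, zero_mul]
    rw [max_eq_right (by linarith : (0:ℝ) - τ ≤ 0)]
  · rw [Real.sign_of_pos h, abs_of_pos h, one_mul]

end PSSVAux

/-- (Theorem 1, PSSV proximal operator.) If `B = U D Vᵀ` is a singular value decomposition
of `B` with singular values `σ₁ ≥ … ≥ σ_m ≥ 0`, `0 ≤ r ≤ m` and `μ > 0`, then
`J* = U (D_r + 𝒮_{1/μ}[D_{r'}]) Vᵀ` is a global minimizer of
`min_J ‖J‖_{>r} + (μ/2)‖J − B‖_F²`, where `D_r` keeps the `r` largest singular values,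
`D_{r'}` the remaining ones, and `‖M‖_F² = tr(MMᵀ)`. -/
theorem pssv_proximal_operator {m : ℕ}
    (B U V : Matrix (Fin m) (Fin m) ℝ) (σ : Fin m → ℝ)
    (hU : Uᵀ * U = 1) (hV : Vᵀ * V = 1)
    (hσdesc : Antitone σ) (hσnonneg : ∀ i, 0 ≤ σ i)
    (hB : B = U * Matrix.diagonal σ * Vᵀ)
    (hσsv : ∀ i, σ i = singularValuesDesc B i)
    (r : ℕ) (hr : r ≤ m) (μ : ℝ) (hμ : 0 < μ) :
    let Dr : Matrix (Fin m) (Fin m) ℝ :=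
      Matrix.diagonal fun i => if (i : ℕ) < r then σ i else 0
    let Dr' : Matrix (Fin m) (Fin m) ℝ :=
      Matrix.diagonal fun i => if r ≤ (i : ℕ) then σ i else 0
    let Jstar : Matrix (Fin m) (Fin m) ℝ :=
      U * (Dr + Dr'.map (softThreshold μ⁻¹)) * Vᵀ
    ∀ J : Matrix (Fin m) (Fin m) ℝ,
      pssvNorm r Jstar + μ / 2 * Matrix.trace ((Jstar - B) * (Jstar - B)ᵀ) ≤
        pssvNorm r J + μ / 2 * Matrix.trace ((J - B) * (J - B)ᵀ) := by
  intro Dr Dr' Jstar J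
  classical
  have hμinv : 0 < μ⁻¹ := inv_pos.mpr hμ
  set g : Fin m → ℝ := fun i => if (i : ℕ) < r then σ i else max (σ i - μ⁻¹) 0 with hgdef
  have hg0 : ∀ i, 0 ≤ g i := by
    intro i
    rw [hgdef]
    dsimp only
    split
    · exact hσnonneg i
    · exact le_max_right _ _
  have hganti : Antitone g := by
    intro i j hij
    rw [hgdef]
    dsimp only
    have hijn : (i : ℕ) ≤ (j : ℕ) := hij
    by_cases hi : (i : ℕ) < r <;> by_cases hj : (j : ℕ) < r
    · simpa [hi, hj] using hσdesc hij
    · simp only [hi, hj, if_true, if_false]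
      exact max_le (by linarith [hσdesc hij, hμinv]) (hσnonneg i)
    · omega
    · simp only [hi, hj, if_false]
      exact max_le_max (by linarith [hσdesc hij]) le_rfl
  have hDmap : Dr + Dr'.map (softThreshold μ⁻¹) = Matrix.diagonal g := by
    have h0 : softThreshold μ⁻¹ 0 = 0 := by
      unfold softThreshold
      simp
    rw [show Dr' = Matrix.diagonal fun i : Fin m => if r ≤ (i : ℕ) then σ i else 0 from rfl,
      Matrix.diagonal_map h0,
      show Dr = Matrix.diagonal fun i : Fin m => if (i : ℕ) < r then σ i else 0 from rfl,
      Matrix.diagonal_add]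
    apply congrArg Matrix.diagonal
    funext i
    by_cases hi : (i : ℕ) < r
    · simp [hi, not_le.mpr hi, hgdef, h0]
    · simp [hi, not_lt.mp hi, hgdef, pssv_soft_eq hμinv (hσnonneg i)]
  have hJstar : Jstar = U * Matrix.diagonal g * Vᵀ := by
    rw [show Jstar = U * (Dr + Dr'.map (softThreshold μ⁻¹)) * Vᵀ from rfl, hDmap]
  have hsvstar : singularValuesDesc Jstar = g :=
    pssv_svd_vals Jstar U V g hU hV hganti hg0 hJstar
  have hJsB : Jstar - B = U * Matrix.diagonal (fun i => g i - σ i) * Vᵀ := by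
    rw [hJstar, hB,
      show Matrix.diagonal (fun i => g i - σ i)
          = Matrix.diagonal g - Matrix.diagonal σ from by
        rw [Matrix.diagonal_sub]]
    noncomm_ring
  have htrL : Matrix.trace ((Jstar - B) * (Jstar - B)ᵀ) = ∑ i : Fin m, (g i - σ i) * (g i - σ i) :=
    pssv_trace_sq _ U V _ hU hV hJsB
  obtain ⟨P, Q2, hP2, hQ2, hJd⟩ := pssv_svd_exists J
  set x := singularValuesDesc J with hx
  have hxa : Antitone x := pssv_sdesc_antitone J
  have hx0 : ∀ i, 0 ≤ x i := pssv_sdesc_nonneg J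
  have htrJJ : Matrix.trace (J * Jᵀ) = ∑ i : Fin m, x i * x i := pssv_trace_sq J P Q2 x hP2 hQ2 hJd
  have htrBB : Matrix.trace (B * Bᵀ) = ∑ i : Fin m, σ i * σ i := pssv_trace_sq B U V σ hU hV hB
  have hVN : Matrix.trace (Jᵀ * B) ≤ ∑ i : Fin m, x i * σ i :=
    pssv_vonNeumann J B P Q2 U V x σ hP2 hQ2 hU hV hxa hx0 hσdesc hσnonneg hJd hB
  have hexp : Matrix.trace ((J - B) * (J - B)ᵀ)
      = Matrix.trace (J * Jᵀ) - 2 * Matrix.trace (Jᵀ * B) + Matrix.trace (B * Bᵀ) := by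
    have h1 : (J - B) * (J - B)ᵀ = J * Jᵀ - J * Bᵀ - B * Jᵀ + B * Bᵀ := by
      rw [Matrix.transpose_sub]
      noncomm_ring
    rw [h1, Matrix.trace_add, Matrix.trace_sub, Matrix.trace_sub]
    have h2 : Matrix.trace (J * Bᵀ) = Matrix.trace (Jᵀ * B) := by
      rw [← Matrix.trace_transpose (J * Bᵀ), Matrix.transpose_mul, Matrix.transpose_transpose,
        Matrix.trace_mul_comm]
    have h3 : Matrix.trace (B * Jᵀ) = Matrix.trace (Jᵀ * B) := Matrix.trace_mul_comm B Jᵀ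
    rw [h2, h3]
    ring
  have htrR : ∑ i : Fin m, (x i - σ i) * (x i - σ i) ≤ Matrix.trace ((J - B) * (J - B)ᵀ) := by
    rw [hexp, htrJJ, htrBB]
    have heq : ∑ i : Fin m, (x i - σ i) * (x i - σ i)
        = ∑ i : Fin m, x i * x i - 2 * (∑ i : Fin m, x i * σ i) + ∑ i : Fin m, σ i * σ i := by
      rw [Finset.mul_sum]
      rw [← Finset.sum_sub_distrib, ← Finset.sum_add_distrib]
      exact Finset.sum_congr rfl fun i _ => by ring
    rw [heq]
    linarith [hVN]
  have hpt : ∀ i : Fin m,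
      (if r ≤ (i : ℕ) then g i else 0) + μ / 2 * ((g i - σ i) * (g i - σ i))
        ≤ (if r ≤ (i : ℕ) then x i else 0) + μ / 2 * ((x i - σ i) * (x i - σ i)) := by
    intro i
    by_cases hi : r ≤ (i : ℕ)
    · simp only [hi, if_true]
      have hgi : g i = max (σ i - μ⁻¹) 0 := by
        rw [hgdef]
        simp [not_lt.mpr hi]
      rw [hgi]
      exact pssv_scalar hμ (hσnonneg i) (hx0 i)
    · simp only [hi, if_false]
      have hgi : g i = σ i := by
        rw [hgdef]
        simp [lt_of_not_ge hi]
      rw [hgi]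
      have h1 : 0 ≤ μ / 2 * ((x i - σ i) * (x i - σ i)) :=
        mul_nonneg (by linarith) (mul_self_nonneg _)
      simp only [sub_self, mul_zero, zero_add, add_zero]
      linarith
  calc pssvNorm r Jstar + μ / 2 * Matrix.trace ((Jstar - B) * (Jstar - B)ᵀ)
      = ∑ i : Fin m, ((if r ≤ (i : ℕ) then g i else 0)
          + μ / 2 * ((g i - σ i) * (g i - σ i))) := by
        rw [htrL]
        unfold pssvNorm
        rw [hsvstar, Finset.mul_sum, Finset.sum_add_distrib]
    _ ≤ ∑ i : Fin m, ((if r ≤ (i : ℕ) then x i else 0)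
          + μ / 2 * ((x i - σ i) * (x i - σ i))) :=
        Finset.sum_le_sum fun i _ => hpt i
    _ = pssvNorm r J + μ / 2 * (∑ i : Fin m, (x i - σ i) * (x i - σ i)) := by
        unfold pssvNorm
        rw [Finset.sum_add_distrib, Finset.mul_sum]
    _ ≤ pssvNorm r J + μ / 2 * Matrix.trace ((J - B) * (J - B)ᵀ) := by
        have := mul_le_mul_of_nonneg_left htrR (by linarith : (0:ℝ) ≤ μ / 2)
        linarith
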